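/- For every field K with algebraic closure K^a and every set of primes 𝒫, there exists an intermediate field M of K^a/K such that every finite subextension of M/K has degree a 𝒫-number (M/K is a 𝒫-extension), and M is 𝒫-closed, i.e. M has no finite field extension of degree a 𝒫-number greater than 1. -/

import Mathlib

universe u

/-- A `𝒫`-number: a positive integer all of whose prime divisors lie in `𝒫`. -/
def IsPNumber (P : Set ℕ) (n : ℕ) : Prop :=
  0 < n ∧ ∀ q : ℕ, q.Prime → q ∣ n → q ∈ P


set_option maxHeartbeats 1000000
set_option synthInstance.maxHeartbeats 400000
set_option linter.unusedSectionVars false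
set_option linter.unusedVariables false

open IntermediateField Module

section Aux

variable {K Ka : Type u} [Field K] [Field Ka] [Algebra K Ka] [IsAlgClosure K Ka]

/-- `M/K` is a `𝒫`-extension. -/
def GoodPExt (P : Set ℕ) (M : IntermediateField K Ka) : Prop :=
  ∀ E : IntermediateField K Ka, E ≤ M → FiniteDimensional K E →
    IsPNumber P (Module.finrank K E)

theorem finrank_dvd_of_le' {F L : Type u} [Field F] [Field L] [Algebra F L]
    {A B : IntermediateField F L} (h : A ≤ B) :
    Module.finrank F A ∣ Module.finrank F B :=
  dvd_of_mul_right_eq _ (IntermediateField.finrank_bot_mul_relfinrank h)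

theorem goodPExt_step (P : Set ℕ) {M : IntermediateField K Ka} (hM : GoodPExt P M)
    (N : IntermediateField M Ka) [FiniteDimensional M N] (hN : IsPNumber P (Module.finrank M N)) :
    GoodPExt P (N.restrictScalars K) := by
  classical
  have halgKa : Algebra.IsAlgebraic K Ka := IsAlgClosure.isAlgebraic
  have halgM : Algebra.IsAlgebraic M Ka := Algebra.IsAlgebraic.tower_top (K := K) M
  intro E hE hEfin
  -- `T` is the compositum `E M` viewed over `M`.
  set T : IntermediateField M Ka := IntermediateField.adjoin M (E : Set Ka) with hTdef
  have hTN : T ≤ N := IntermediateField.adjoin_le_iff.2 hE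
  set pT : Submodule (↥M) Ka := Subalgebra.toSubmodule T.toSubalgebra with hpTdef
  -- `T` is the `M`-span of `E`.
  have hspan : Submodule.span (↥M) (E : Set Ka) = pT := by
    rw [hpTdef, hTdef, IntermediateField.adjoin_toSubalgebra_of_isAlgebraic
      (fun x _ => halgM.isAlgebraic x), Algebra.adjoin_eq_span]
    have hcl : (Submonoid.closure (E : Set Ka) : Set Ka) ⊆ (E : Set Ka) := by
      intro x hx
      induction hx using Submonoid.closure_induction with
      | mem _ h => exact h
      | one => exact one_mem E
      | mul _ _ _ _ hx hy => exact mul_mem hx hy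
    refine le_antisymm ?_ ?_
    · exact Submodule.span_mono Submonoid.subset_closure
    · exact Submodule.span_le.2 (hcl.trans Submodule.subset_span)
  -- choose a basis `b ⊆ E` of `T` over `M`
  obtain ⟨b, hbE, hbspan, hbli⟩ := exists_linearIndependent (↥M) (E : Set Ka)
  rw [hspan] at hbspan
  haveI hNfin' : FiniteDimensional (↥M) ↥(Subalgebra.toSubmodule N.toSubalgebra) :=
    ‹FiniteDimensional (↥M) (↥N)›
  haveI hTfin' : FiniteDimensional (↥M) ↥pT :=
    Submodule.finiteDimensional_of_le (S₂ := Subalgebra.toSubmodule N.toSubalgebra) hTN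
  haveI : IsNoetherian (↥M) ↥pT := IsNoetherian.iff_fg.2 inferInstance
  have hbT : ∀ x : b, (x : Ka) ∈ pT := fun x => hbspan ▸ Submodule.subset_span x.2
  have hli' : LinearIndependent (↥M) (fun x : b => (⟨x, hbT x⟩ : ↥pT)) :=
    LinearIndependent.of_comp pT.subtype (by exact hbli)
  have hbfin : b.Finite := Set.finite_coe_iff.1 hli'.finite_of_isNoetherian
  haveI : Fintype b := hbfin.fintype
  -- the degree `D = [EM : M]`
  set D : ℕ := Module.finrank (↥M) (↥T) with hDdef
  have hDcard : D = b.toFinset.card := by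
    have h1 : Module.finrank (↥M) ↥pT = b.toFinset.card := by
      rw [← hbspan]
      exact finrank_span_set_eq_card hbli
    rw [hDdef, ← h1]; rfl
  have hDdvd : D ∣ Module.finrank (↥M) (↥N) :=
    dvd_of_mul_right_eq _ (IntermediateField.finrank_bot_mul_relfinrank hTN)
  have hDP : IsPNumber P D :=
    ⟨Nat.pos_of_dvd_of_pos hDdvd hN.1, fun q hq hqd => hN.2 q hq (hqd.trans hDdvd)⟩
  -- a finite `K`-spanning set of `E`
  have hintKa : Algebra.IsIntegral K Ka := halgKa.isIntegral
  set n : ℕ := Module.finrank K (↥E) with hn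
  set basE : Basis (Fin n) K (↥E) := Module.finBasis K (↥E) with hbasE
  set g : Fin n → Ka := fun j => ((basE j : ↥E) : Ka) with hgdef
  have hgE : ∀ j, g j ∈ E := fun j => (basE j).2
  have hgspan : ∀ x ∈ E, x ∈ Submodule.span K (Set.range g) := by
    intro x hx
    have h1 : (⟨x, hx⟩ : ↥E) ∈ (⊤ : Submodule K ↥E) := trivial
    rw [← basE.span_eq] at h1
    have h2 := Submodule.mem_map_of_mem (f := E.val.toLinearMap) h1
    rw [← Submodule.span_image] at h2
    have h3 : E.val.toLinearMap '' Set.range basE = Set.range g := by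
      rw [← Set.range_comp]; rfl
    rwa [h3] at h2
  have hgT : ∀ j, g j ∈ Submodule.span (↥M) b := by
    intro j
    rw [hbspan, ← hspan]
    exact Submodule.subset_span (hgE j)
  choose c hc1 hc2 using fun j => Submodule.mem_span_set.1 (hgT j)
  set C : Set Ka := ⋃ j, (fun e => ((c j e : ↥M) : Ka)) '' ((c j).support : Set Ka) with hCdef
  have hCfin : C.Finite := Set.finite_iUnion fun j => (c j).support.finite_toSet.image _
  have hCM : C ⊆ (M : Set Ka) := by
    rintro x hx
    simp only [hCdef, Set.mem_iUnion, Set.mem_image] at hx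
    obtain ⟨j, e, _, rfl⟩ := hx
    exact (c j e).2
  haveI := hCfin.to_subtype
  set F : IntermediateField K Ka := IntermediateField.adjoin K C with hFdef
  haveI hFfin : FiniteDimensional K ↥F :=
    IntermediateField.finiteDimensional_adjoin (fun x _ => Algebra.IsIntegral.isIntegral x)
  have hFM : F ≤ M := IntermediateField.adjoin_le_iff.2 hCM
  set V : Submodule (↥F) Ka := Submodule.span (↥F) b with hVdef
  have hsm : ∀ (x : Ka) (hx : x ∈ F) (y : Ka), (⟨x, hx⟩ : ↥F) • y = x * y := by
    intro x hx y
    rw [Algebra.smul_def, IntermediateField.algebraMap_apply]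
  have hsmM : ∀ (m : ↥M) (y : Ka), m • y = (m : Ka) * y := by
    intro m y
    rw [Algebra.smul_def, IntermediateField.algebraMap_apply]
  -- `E ⊆ V`
  have hgV : ∀ j, g j ∈ V := by
    intro j
    rw [← hc2 j]
    refine Submodule.sum_mem _ ?_
    intro mi hmi
    show (c j) mi • mi ∈ V
    have hmib : mi ∈ b := hc1 j hmi
    have hcoefF : ((c j mi : ↥M) : Ka) ∈ F := by
      refine IntermediateField.subset_adjoin K C ?_
      simp only [hCdef, Set.mem_iUnion, Set.mem_image]
      exact ⟨j, mi, hmi, rfl⟩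
    have heqsm : (c j mi) • mi = (⟨((c j mi : ↥M) : Ka), hcoefF⟩ : ↥F) • mi := by
      rw [hsm, hsmM]
    rw [heqsm]
    exact Submodule.smul_mem _ _ (Submodule.subset_span hmib)
  have hEV : ∀ x ∈ E, x ∈ V := by
    intro x hx
    have hle : Submodule.span K (Set.range g) ≤ V.restrictScalars K := by
      refine Submodule.span_le.2 ?_
      rintro _ ⟨j, rfl⟩
      exact hgV j
    exact hle (hgspan x hx)
  -- `V` is a subalgebra
  have h1V : (1 : Ka) ∈ V := hEV 1 (one_mem E)
  have hmulV : ∀ x y, x ∈ V → y ∈ V → x * y ∈ V := by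
    intro x y hx hy
    have h2 : V * V ≤ V := by
      rw [hVdef, Submodule.span_mul_span]
      refine Submodule.span_le.2 ?_
      intro z hz
      obtain ⟨z1, hz1, z2, hz2, rfl⟩ := Set.mem_mul.1 hz
      exact hEV _ (mul_mem (hbE hz1) (hbE hz2))
    exact h2 (Submodule.mul_mem_mul hx hy)
  set Salg : Subalgebra (↥F) Ka := V.toSubalgebra h1V hmulV with hSalgdef
  have halgF : Algebra.IsAlgebraic (↥F) Ka := Algebra.IsAlgebraic.tower_top (K := K) F
  have hSalgAlg : Salg.IsAlgebraic := fun x _ => halgF.isAlgebraic x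
  set IV : IntermediateField (↥F) Ka := hSalgAlg.toIntermediateField with hIVdef
  have hmemIV : ∀ x : Ka, x ∈ IV ↔ x ∈ V := fun x => Iff.rfl
  -- `restrictScalars K IV = E ⊔ F`
  have heq : IV.restrictScalars K = E ⊔ F := by
    refine le_antisymm ?_ (sup_le ?_ ?_)
    · intro x hx
      have hx' : x ∈ V := hx
      have hVsub : V ≤ Subalgebra.toSubmodule
          (IntermediateField.extendScalars (le_sup_right : F ≤ E ⊔ F)).toSubalgebra := by
        refine Submodule.span_le.2 ?_
        intro z hz
        exact (le_sup_left : E ≤ E ⊔ F) (hbE hz)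
      exact hVsub hx'
    · intro x hx
      exact (show x ∈ V from hEV x hx)
    · intro x hx
      have hxV : (⟨x, hx⟩ : ↥F) • (1 : Ka) ∈ V := Submodule.smul_mem _ _ h1V
      rwa [hsm, mul_one] at hxV
  -- compute `[E ⊔ F : F] = D`
  have hFle : F ≤ E ⊔ F := le_sup_right
  have hext : IntermediateField.extendScalars hFle = IV := by
    apply IntermediateField.restrictScalars_injective K
    rw [IntermediateField.extendScalars_restrictScalars, heq]
  have hbliF : LinearIndependent (↥F) ((↑) : b → Ka) := by
    rw [Fintype.linearIndependent_iff]
    intro gco hsum i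
    set gM : b → ↥M := fun i => ⟨((gco i : ↥F) : Ka), hFM (gco i).2⟩ with hgM
    have hsum' : ∑ i, gM i • (i : Ka) = 0 := by
      rw [← hsum]
      refine Finset.sum_congr rfl ?_
      intro i _
      rw [hsmM]
      conv_rhs => rw [show gco i = (⟨((gco i : ↥F) : Ka), (gco i).2⟩ : ↥F) from rfl, hsm]
    have hz := (Fintype.linearIndependent_iff.1 hbli) gM hsum' i
    have : ((gco i : ↥F) : Ka) = 0 := by
      have := congrArg (Subtype.val) hz
      simpa [hgM] using this
    exact Subtype.ext this
  have hrel : IntermediateField.relfinrank F (E ⊔ F) = D := by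
    rw [IntermediateField.relfinrank_eq_finrank_of_le hFle, hext]
    have hfr : Module.finrank (↥F) (↥IV) = Module.finrank (↥F) (↥V) := rfl
    rw [hfr, hVdef, finrank_span_set_eq_card hbliF, hDcard]
  have hEFrank : Module.finrank K ↥(E ⊔ F) = Module.finrank K ↥F * D := by
    rw [← IntermediateField.finrank_bot_mul_relfinrank hFle, hrel]
  -- conclusion
  have hEdvd : Module.finrank K ↥E ∣ Module.finrank K ↥(E ⊔ F) := finrank_dvd_of_le' le_sup_left
  have hFP : IsPNumber P (Module.finrank K ↥F) := hM F hFM hFfin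
  refine ⟨Module.finrank_pos, ?_⟩
  intro q hq hqd
  have hq2 : q ∣ Module.finrank K ↥F * D := hqd.trans (hEFrank ▸ hEdvd)
  rcases (Nat.Prime.dvd_mul hq).1 hq2 with h | h
  · exact hFP.2 q hq h
  · exact hDP.2 q hq h

end Aux

section Main

variable {K Ka : Type u} [Field K] [Field Ka] [Algebra K Ka] [IsAlgClosure K Ka]

omit [IsAlgClosure K Ka] in
theorem goodPExt_bot (P : Set ℕ) : GoodPExt (K := K) (Ka := Ka) P ⊥ := by
  intro E hE _
  rw [le_bot_iff.1 hE, IntermediateField.finrank_bot]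
  exact ⟨one_pos, fun q hq hqd => absurd (Nat.dvd_one.1 hqd) hq.ne_one⟩

omit [IsAlgClosure K Ka] in
theorem goodPExt_fg (E : IntermediateField K Ka) [FiniteDimensional K E] :
    ∃ s : Set Ka, s.Finite ∧ IntermediateField.adjoin K s = E := by
  classical
  set basE : Basis (Fin (Module.finrank K ↥E)) K (↥E) := Module.finBasis K (↥E)
  set g : Fin (Module.finrank K ↥E) → Ka := fun j => ((basE j : ↥E) : Ka) with hgdef
  refine ⟨Set.range g, Set.finite_range g, le_antisymm ?_ ?_⟩
  · refine IntermediateField.adjoin_le_iff.2 ?_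
    rintro _ ⟨j, rfl⟩
    exact (basE j).2
  · intro x hx
    have h1 : (⟨x, hx⟩ : ↥E) ∈ (⊤ : Submodule K ↥E) := trivial
    rw [← basE.span_eq] at h1
    have h2 := Submodule.mem_map_of_mem (f := E.val.toLinearMap) h1
    rw [← Submodule.span_image] at h2
    have h3 : E.val.toLinearMap '' Set.range basE = Set.range g := by
      rw [← Set.range_comp]; rfl
    rw [h3] at h2
    have hle : Submodule.span K (Set.range g) ≤
        Subalgebra.toSubmodule (IntermediateField.adjoin K (Set.range g)).toSubalgebra :=
      Submodule.span_le.2 (IntermediateField.subset_adjoin K _)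
    exact hle h2

theorem exists_maximal_goodPExt (P : Set ℕ) :
    ∃ M : IntermediateField K Ka, Maximal (GoodPExt P) M := by
  have ih : ∀ c ⊆ setOf (GoodPExt (K := K) (Ka := Ka) P), IsChain (· ≤ ·) c →
      ∀ y ∈ c, ∃ ub ∈ setOf (GoodPExt (K := K) (Ka := Ka) P), ∀ z ∈ c, z ≤ ub := by
    intro c hcS hchain y hy
    refine ⟨sSup c, ?_, fun z hz => le_sSup hz⟩
    intro E hE hEfin
    obtain ⟨s, hsfin, hsadj⟩ := goodPExt_fg E
    have hcomp := IntermediateField.adjoin_finite_isCompactElement (F := K) (E := Ka) hsfin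
    rw [hsadj] at hcomp
    obtain ⟨N, hNc, hEN⟩ := (CompleteLattice.isCompactElement_iff_le_of_directed_sSup_le (α := IntermediateField K Ka) E).1 hcomp
      c ⟨y, hy⟩ hchain.directedOn hE
    exact hcS hNc E hEN hEfin
  obtain ⟨m, -, hm⟩ := zorn_le_nonempty₀ _ ih ⊥ (goodPExt_bot P)
  exact ⟨m, hm⟩

end Main

universe v


/-- for every field `K` with algebraic closure `K^a` and every set of primes
`𝒫`, there exists an intermediate field `M` of `K^a/K` such that `M/K` is a
`𝒫`-extension (every finite subextension of `M/K` has degree a `𝒫`-number), and `M` is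
`𝒫`-closed (`M` has no finite field extension of degree a `𝒫`-number greater than
`1`). -/
theorem exists_maximal_PExtension {K Ka : Type u} [Field K] [Field Ka] [Algebra K Ka]
    [IsAlgClosure K Ka] (P : Set ℕ) (hP : ∀ p ∈ P, Nat.Prime p) :
    ∃ M : IntermediateField K Ka,
      (∀ E : IntermediateField K Ka, E ≤ M → FiniteDimensional K E →
        IsPNumber P (Module.finrank K E)) ∧
      (∀ (L : Type u) [Field L] [Algebra M L], FiniteDimensional M L →
        IsPNumber P (Module.finrank M L) → Module.finrank M L = 1) := by
  obtain ⟨M, hmax⟩ := exists_maximal_goodPExt (K := K) (Ka := Ka) P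
  refine ⟨M, hmax.prop, ?_⟩
  intro L _ _ hLfin hLP
  haveI : IsAlgClosed Ka := IsAlgClosure.isAlgClosed (R := K)
  haveI : Algebra.IsAlgebraic (↥M) L := Algebra.IsAlgebraic.of_finite _ _
  set φ : L →ₐ[↥M] Ka := IsAlgClosed.lift with hφ
  set N : IntermediateField (↥M) Ka := φ.fieldRange with hN
  have e : L ≃ₐ[↥M] N := AlgEquiv.ofInjectiveField φ
  haveI : FiniteDimensional (↥M) (↥N) := LinearEquiv.finiteDimensional e.toLinearEquiv
  have hrank : Module.finrank (↥M) (↥N) = Module.finrank (↥M) L :=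
    (e.toLinearEquiv.finrank_eq).symm
  have hNP : IsPNumber P (Module.finrank (↥M) (↥N)) := by rwa [hrank]
  have hgoodN := goodPExt_step P hmax.prop N hNP
  have hMle : M ≤ N.restrictScalars K := by
    intro x hx
    show x ∈ N
    exact ⟨algebraMap (↥M) L ⟨x, hx⟩, φ.commutes ⟨x, hx⟩⟩
  have hle2 : N.restrictScalars K ≤ M := hmax.2 hgoodN hMle
  have hNbot : N = ⊥ := by
    refine le_antisymm ?_ bot_le
    intro x hx
    have hxM : x ∈ M := hle2 hx
    rw [IntermediateField.mem_bot]
    exact ⟨⟨x, hxM⟩, rfl⟩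
  rw [← hrank, hNbot, IntermediateField.finrank_bot]
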